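/- Let y be a Gaussian random variable with mean μ and variance σ², σ > 0, let a ∈ ℝ be the failure threshold, and let δ > 0. Define z = (a − μ)/σ, z⁺ = (a + δ − μ)/σ, and z⁻ = (a − δ − μ)/σ, and let Φ and φ denote the standard normal cumulative distribution function and density, respectively. Then the expected improvement E[max(δ − |y − a|, 0)] equals δ·(Φ(z⁺) − Φ(z⁻)) − σ·(2φ(z) − φ(z⁻) − φ(z⁺)) + (μ − a)·(2Φ(z) − Φ(z⁻) − Φ(z⁺)). -/

import Mathlib

open MeasureTheory ProbabilityTheory Real
open scoped NNReal ENNReal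

/-- The standard normal probability density function. -/
noncomputable def stdNormalPDF (t : ℝ) : ℝ :=
  (1 / Real.sqrt (2 * Real.pi)) * Real.exp (-t ^ 2 / 2)

/-- The standard normal cumulative distribution function. -/
noncomputable def stdNormalCDF (t : ℝ) : ℝ :=
  ∫ u in Set.Iic t, stdNormalPDF u

lemma stdNormalPDF_continuous : Continuous stdNormalPDF := by
  unfold stdNormalPDF; fun_prop

lemma stdNormalPDF_integrable : Integrable stdNormalPDF := by
  have : Integrable (fun u : ℝ => Real.exp (-(1/2) * u ^ 2)) := by
    simpa using integrable_exp_neg_mul_sq (by norm_num : (0:ℝ) < 1/2)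
  have h := this.const_mul (1 / Real.sqrt (2 * Real.pi))
  refine h.congr (Filter.Eventually.of_forall fun u => ?_)
  unfold stdNormalPDF; ring_nf

lemma hasDerivAt_neg_stdNormalPDF (x : ℝ) :
    HasDerivAt (fun t => -stdNormalPDF t) (x * stdNormalPDF x) x := by
  have h1 : HasDerivAt (fun t : ℝ => -t ^ 2 / 2) (-x) x := by
    have : HasDerivAt (fun t : ℝ => -t ^ 2 / 2) (-((2 : ℕ) * x ^ (2 - 1)) / 2) x :=
      ((hasDerivAt_pow 2 x).neg).div_const 2
    convert this using 1; ring
  have h2 : HasDerivAt (fun t => -stdNormalPDF t)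
      (-(1 / Real.sqrt (2 * Real.pi) * (Real.exp (-x ^ 2 / 2) * -x))) x :=
    (h1.exp.const_mul (1 / Real.sqrt (2 * Real.pi))).neg
  convert h2 using 1
  unfold stdNormalPDF; ring

lemma intervalIntegral_stdNormalPDF (c d : ℝ) :
    ∫ u in c..d, stdNormalPDF u = stdNormalCDF d - stdNormalCDF c := by
  rw [stdNormalCDF, stdNormalCDF]
  exact (intervalIntegral.integral_Iic_sub_Iic stdNormalPDF_integrable.integrableOn
    stdNormalPDF_integrable.integrableOn).symm

lemma intervalIntegral_mul_stdNormalPDF (c d : ℝ) :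
    ∫ u in c..d, u * stdNormalPDF u = stdNormalPDF c - stdNormalPDF d := by
  have := intervalIntegral.integral_eq_sub_of_hasDerivAt
    (f := fun t => -stdNormalPDF t) (f' := fun t => t * stdNormalPDF t)
    (fun t _ => hasDerivAt_neg_stdNormalPDF t)
    ((continuous_id'.mul stdNormalPDF_continuous).intervalIntegrable c d)
  rw [this]; ring


/-- Closed form for the expected improvement of Bichon et al.: for a Gaussian random
variable `y ~ N(m, σ²)`, threshold `a` and band half-width `δ > 0`, with
`z = (a - m)/σ`, `z⁺ = (a + δ - m)/σ`, `z⁻ = (a - δ - m)/σ`,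
`E[max(δ - |y - a|, 0)] = δ(Φ(z⁺) - Φ(z⁻)) - σ(2φ(z) - φ(z⁻) - φ(z⁺))
  + (m - a)(2Φ(z) - Φ(z⁻) - Φ(z⁺))`. -/
theorem bichon_expected_improvement
    (m σ a δ : ℝ) (hσ : 0 < σ) (hδ : 0 < δ) :
    (∫ y, max (δ - |y - a|) 0 ∂(gaussianReal m (Real.toNNReal (σ ^ 2))))
      = δ * (stdNormalCDF ((a + δ - m) / σ) - stdNormalCDF ((a - δ - m) / σ))
        - σ * (2 * stdNormalPDF ((a - m) / σ) - stdNormalPDF ((a - δ - m) / σ)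
                - stdNormalPDF ((a + δ - m) / σ))
        + (m - a) * (2 * stdNormalCDF ((a - m) / σ) - stdNormalCDF ((a - δ - m) / σ)
                - stdNormalCDF ((a + δ - m) / σ)) := by
  have hσ' : σ ≠ 0 := hσ.ne'
  have hmap : gaussianReal m (Real.toNNReal (σ ^ 2))
      = (gaussianReal 0 1).map (fun x => σ * x + m) := by
    have h1 : (fun x : ℝ => σ * x + m) = (fun x => x + m) ∘ (fun x => σ * x) := rfl
    rw [h1, ← Measure.map_map (by fun_prop) (by fun_prop : Measurable fun x : ℝ => σ * x)]
    have h2 : (fun x : ℝ => σ * x) = (σ * ·) := rfl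
    rw [h2, gaussianReal_map_const_mul, gaussianReal_map_add_const]
    congr 1
    · ring
    · rw [mul_one, ← NNReal.coe_inj]
      simp [Real.coe_toNNReal _ (sq_nonneg σ)]
  have hcont : Continuous (fun y : ℝ => max (δ - |y - a|) 0) :=
    (continuous_const.sub ((continuous_id.sub continuous_const).abs)).max continuous_const
  rw [hmap, integral_map (by fun_prop) hcont.aestronglyMeasurable]
  have hg : gaussianReal 0 1
      = volume.withDensity (fun x => ((Real.toNNReal (gaussianPDFReal 0 1 x) : ℝ≥0) : ℝ≥0∞)) := by
    rw [gaussianReal_of_var_ne_zero 0 one_ne_zero]; rfl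
  rw [hg, integral_withDensity_eq_integral_smul ((measurable_gaussianPDFReal 0 1).real_toNNReal)]
  have hpdf : ∀ u : ℝ, ((Real.toNNReal (gaussianPDFReal 0 1 u) : ℝ≥0) : ℝ) = stdNormalPDF u := by
    intro u
    rw [Real.coe_toNNReal _ (gaussianPDFReal_nonneg 0 1 u)]
    simp only [gaussianPDFReal, stdNormalPDF, NNReal.coe_one, mul_one, one_div]
    norm_num
  simp_rw [NNReal.smul_def, smul_eq_mul, hpdf]
  set z : ℝ := (a - m) / σ with hzdef
  set zm : ℝ := (a - δ - m) / σ with hzmdef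
  set zp : ℝ := (a + δ - m) / σ with hzpdef
  have hσz : σ * z = a - m := by rw [hzdef]; field_simp
  have hσzm : σ * zm = a - δ - m := by rw [hzmdef]; field_simp
  have hσzp : σ * zp = a + δ - m := by rw [hzpdef]; field_simp
  clear_value z zm zp
  have hzmz : zm ≤ z := by nlinarith
  have hzzp : z ≤ zp := by nlinarith
  have hind : (fun u : ℝ => stdNormalPDF u * max (δ - |σ * u + m - a|) 0)
      = Set.indicator (Set.Ioc zm zp) (fun u => (δ - σ * |u - z|) * stdNormalPDF u) := by
    funext u
    have habs : |σ * u + m - a| = σ * |u - z| := by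
      have h' : σ * u + m - a = σ * (u - z) := by rw [mul_sub, hσz]; ring
      rw [h', abs_mul, abs_of_pos hσ]
    by_cases h : u ∈ Set.Ioc zm zp
    · rw [Set.indicator_of_mem h]
      obtain ⟨h1, h2⟩ := h
      have hle : σ * |u - z| ≤ δ := by
        rcases abs_cases (u - z) with ⟨he, _⟩ | ⟨he, _⟩ <;> rw [he] <;> nlinarith
      rw [habs, max_eq_left (by linarith)]; ring
    · rw [Set.indicator_of_notMem h, habs]
      rw [Set.mem_Ioc, not_and_or, not_lt, not_le] at h
      have hge : δ ≤ σ * |u - z| := by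
        rcases h with h | h <;> rcases abs_cases (u - z) with ⟨he, _⟩ | ⟨he, _⟩ <;>
          rw [he] <;> nlinarith
      rw [max_eq_right (by linarith), mul_zero]
  rw [hind, MeasureTheory.integral_indicator measurableSet_Ioc,
    ← intervalIntegral.integral_of_le (hzmz.trans hzzp)]
  have hci : ∀ c d : ℝ, IntervalIntegrable
      (fun u => (δ - σ * |u - z|) * stdNormalPDF u) volume c d := fun c d =>
    (((continuous_const.sub (continuous_const.mul
      ((continuous_id.sub continuous_const).abs))).mul
      stdNormalPDF_continuous).intervalIntegrable c d)
  rw [← intervalIntegral.integral_add_adjacent_intervals (hci zm z) (hci z zp)]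
  have e1 : ∫ u in zm..z, (δ - σ * |u - z|) * stdNormalPDF u
      = (δ - σ * z) * (stdNormalCDF z - stdNormalCDF zm)
        + σ * (stdNormalPDF zm - stdNormalPDF z) := by
    have : ∫ u in zm..z, (δ - σ * |u - z|) * stdNormalPDF u
        = ∫ u in zm..z, ((δ - σ * z) * stdNormalPDF u + σ * (u * stdNormalPDF u)) := by
      apply intervalIntegral.integral_congr
      intro u hu
      rw [Set.uIcc_of_le hzmz] at hu
      simp only
      rw [abs_of_nonpos (by linarith [hu.2] : u - z ≤ 0)]; ring
    rw [this, intervalIntegral.integral_add (f := fun u => (δ - σ * z) * stdNormalPDF u)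
      (g := fun u => σ * (u * stdNormalPDF u))
      ((continuous_const.mul stdNormalPDF_continuous).intervalIntegrable _ _)
      ((continuous_const.mul (continuous_id'.mul stdNormalPDF_continuous)).intervalIntegrable _ _),
      intervalIntegral.integral_const_mul, intervalIntegral.integral_const_mul,
      intervalIntegral_stdNormalPDF, intervalIntegral_mul_stdNormalPDF]
  have e2 : ∫ u in z..zp, (δ - σ * |u - z|) * stdNormalPDF u
      = (δ + σ * z) * (stdNormalCDF zp - stdNormalCDF z)
        - σ * (stdNormalPDF z - stdNormalPDF zp) := by
    have : ∫ u in z..zp, (δ - σ * |u - z|) * stdNormalPDF u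
        = ∫ u in z..zp, ((δ + σ * z) * stdNormalPDF u - σ * (u * stdNormalPDF u)) := by
      apply intervalIntegral.integral_congr
      intro u hu
      rw [Set.uIcc_of_le hzzp] at hu
      simp only
      rw [abs_of_nonneg (by linarith [hu.1] : 0 ≤ u - z)]; ring
    rw [this, intervalIntegral.integral_sub (f := fun u => (δ + σ * z) * stdNormalPDF u)
      (g := fun u => σ * (u * stdNormalPDF u))
      ((continuous_const.mul stdNormalPDF_continuous).intervalIntegrable _ _)
      ((continuous_const.mul (continuous_id'.mul stdNormalPDF_continuous)).intervalIntegrable _ _),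
      intervalIntegral.integral_const_mul, intervalIntegral.integral_const_mul,
      intervalIntegral_stdNormalPDF, intervalIntegral_mul_stdNormalPDF]
  rw [e1, e2]
  linear_combination (stdNormalCDF zm + stdNormalCDF zp - 2 * stdNormalCDF z) * hσz
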